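/- Every monotonic strict partial order on 2^O for a finite set O is captured by some CI-net: there is a CI-net N such that the induced relation >_N equals the given order. -/
import Mathlib


variable {O : Type*} [Fintype O] [DecidableEq O]

/-- A strict partial order: irreflexive, asymmetric, transitive. -/
def IsPrefRel {α : Type*} (r : α → α → Prop) : Prop :=
  (∀ a, ¬ r a a) ∧ (∀ a b, r a b → ¬ r b a) ∧ (∀ a b c, r a b → r b c → r a c)

/-- Monotonicity on subsets of `O`: a strict superset is strictly preferred. -/
def Monotonic (r : Finset O → Finset O → Prop) : Prop :=
  ∀ a b : Finset O, b ⊂ a → r a b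

/-- A CI-statement `S⁺, S⁻ : S₁ ▷ S₂` on `O`. -/
structure CIStmt (O : Type*) [DecidableEq O] where
  sp : Finset O
  sm : Finset O
  s1 : Finset O
  s2 : Finset O
  h1 : s1.Nonempty
  h2 : s2.Nonempty
  dpm : Disjoint sp sm
  dp1 : Disjoint sp s1
  dp2 : Disjoint sp s2
  dm1 : Disjoint sm s1
  dm2 : Disjoint sm s2
  d12 : Disjoint s1 s2

/-- `r` satisfies a CI-statement. -/
def SatStmt (r : Finset O → Finset O → Prop) (c : CIStmt O) : Prop :=
  ∀ S' : Finset O, S' ⊆ Finset.univ \ (c.sp ∪ c.sm ∪ c.s1 ∪ c.s2) →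
    r (S' ∪ c.sp ∪ c.s1) (S' ∪ c.sp ∪ c.s2)

/-- `r` satisfies a CI-net: monotone and satisfies each statement. -/
def SatNet (r : Finset O → Finset O → Prop) (N : Set (CIStmt O)) : Prop :=
  Monotonic r ∧ ∀ c ∈ N, SatStmt r c

/-- A CI-net is satisfiable. -/
def CISatisfiable (N : Set (CIStmt O)) : Prop :=
  ∃ r : Finset O → Finset O → Prop, IsPrefRel r ∧ SatNet r N

/-- CI-flip with respect to `N`. -/
def CIFlip (N : Set (CIStmt O)) (a b : Finset O) : Prop :=
  ∃ c ∈ N, ∃ S' ⊆ Finset.univ \ (c.sp ∪ c.sm ∪ c.s1 ∪ c.s2),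
    a = S' ∪ c.sp ∪ c.s1 ∧ b = S' ∪ c.sp ∪ c.s2

/-- Worsening flip: a `⊃`-flip or a CI-flip. -/
def WFlip (N : Set (CIStmt O)) (a b : Finset O) : Prop :=
  b ⊂ a ∨ CIFlip N a b

/-- The intersection of all preference relations satisfying `N`. -/
def Induced (N : Set (CIStmt O)) (a b : Finset O) : Prop :=
  ∀ r : Finset O → Finset O → Prop, IsPrefRel r ∧ SatNet r N → r a b

/-- Auxiliary: the CI-statement encoding `a ▷ b` with no free context. -/
def mkStmt (a b : Finset O) (h1 : (a \ b).Nonempty) (h2 : (b \ a).Nonempty) :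
    CIStmt O where
  sp := a ∩ b
  sm := (a ∪ b)ᶜ
  s1 := a \ b
  s2 := b \ a
  h1 := h1
  h2 := h2
  dpm := by
    rw [Finset.disjoint_left]; intro x hx hy
    simp only [Finset.mem_inter, Finset.mem_compl, Finset.mem_union] at hx hy; tauto
  dp1 := by
    rw [Finset.disjoint_left]; intro x hx hy
    simp only [Finset.mem_inter, Finset.mem_sdiff] at hx hy; tauto
  dp2 := by
    rw [Finset.disjoint_left]; intro x hx hy
    simp only [Finset.mem_inter, Finset.mem_sdiff] at hx hy; tauto
  dm1 := by
    rw [Finset.disjoint_left]; intro x hx hy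
    simp only [Finset.mem_compl, Finset.mem_union, Finset.mem_sdiff] at hx hy; tauto
  dm2 := by
    rw [Finset.disjoint_left]; intro x hx hy
    simp only [Finset.mem_compl, Finset.mem_union, Finset.mem_sdiff] at hx hy; tauto
  d12 := by
    rw [Finset.disjoint_left]; intro x hx hy
    simp only [Finset.mem_sdiff] at hx hy; tauto

lemma mkStmt_cover (a b : Finset O) :
    (a ∩ b) ∪ (a ∪ b)ᶜ ∪ (a \ b) ∪ (b \ a) = (Finset.univ : Finset O) := by
  ext x
  simp only [Finset.mem_union, Finset.mem_inter, Finset.mem_compl, Finset.mem_sdiff,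
    Finset.mem_univ, iff_true]
  tauto

lemma sdiff_nonempties (r : Finset O → Finset O → Prop)
    (hr : IsPrefRel r) (hm : Monotonic r) {a b : Finset O}
    (hab : r a b) (hn : ¬ b ⊂ a) : (a \ b).Nonempty ∧ (b \ a).Nonempty := by
  constructor
  · rw [Finset.sdiff_nonempty]
    intro hsub
    rcases eq_or_lt_of_le hsub with h | h
    · exact hr.1 a (h ▸ hab)
    · exact hr.2.1 a b hab (hm b a h)
  · rw [Finset.sdiff_nonempty]
    intro hsub
    rcases eq_or_lt_of_le hsub with h | h
    · exact hr.1 a (h ▸ hab)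
    · exact hn h

/-- every monotonic strict partial order on `2^O` is captured by
some (finite) CI-net: the induced relation equals the given order. -/
theorem stmt_4 (r : Finset O → Finset O → Prop)
    (hr : IsPrefRel r) (hm : Monotonic r) :
    ∃ N : Set (CIStmt O), N.Finite ∧ ∀ a b : Finset O, Induced N a b ↔ r a b := by
  classical
  set P : Set (Finset O × Finset O) := {p | r p.1 p.2 ∧ ¬ p.2 ⊂ p.1} with hP
  refine ⟨(fun p : {p : Finset O × Finset O // p ∈ P} =>
      mkStmt p.1.1 p.1.2 (sdiff_nonempties r hr hm p.2.1 p.2.2).1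
        (sdiff_nonempties r hr hm p.2.1 p.2.2).2) '' Set.univ, ?_, ?_⟩
  · exact Set.finite_univ.image _
  intro a b
  constructor
  · intro hInd
    refine hInd r ⟨hr, hm, ?_⟩
    rintro c ⟨⟨⟨a', b'⟩, hab', hn'⟩, -, rfl⟩
    intro S' hS'
    have hS0 : S' = ∅ := by
      simp only [mkStmt] at hS'
      rw [mkStmt_cover, Finset.sdiff_self] at hS'
      exact Finset.subset_empty.mp hS'
    subst hS0
    have e1 : (∅ : Finset O) ∪ (a' ∩ b') ∪ (a' \ b') = a' := by
      ext x
      simp only [Finset.mem_union, Finset.mem_inter, Finset.mem_sdiff,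
        Finset.notMem_empty, false_or]
      tauto
    have e2 : (∅ : Finset O) ∪ (a' ∩ b') ∪ (b' \ a') = b' := by
      ext x
      simp only [Finset.mem_union, Finset.mem_inter, Finset.mem_sdiff,
        Finset.notMem_empty, false_or]
      tauto
    simp only [mkStmt]
    rw [e1, e2]
    exact hab'
  · intro hab
    intro r' ⟨hr', hmono', hsat'⟩
    by_cases hn : b ⊂ a
    · exact hmono' a b hn
    · have hc : mkStmt a b (sdiff_nonempties r hr hm hab hn).1
          (sdiff_nonempties r hr hm hab hn).2 ∈
          (fun p : {p : Finset O × Finset O // p ∈ P} =>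
            mkStmt p.1.1 p.1.2 (sdiff_nonempties r hr hm p.2.1 p.2.2).1
              (sdiff_nonempties r hr hm p.2.1 p.2.2).2) '' Set.univ :=
        ⟨⟨(a, b), hab, hn⟩, Set.mem_univ _, rfl⟩
      have := hsat' _ hc ∅ (by simp)
      have e1 : (∅ : Finset O) ∪ (a ∩ b) ∪ (a \ b) = a := by
        ext x
        simp only [Finset.mem_union, Finset.mem_inter, Finset.mem_sdiff,
          Finset.notMem_empty, false_or]
        tauto
      have e2 : (∅ : Finset O) ∪ (a ∩ b) ∪ (b \ a) = b := by
        ext x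
        simp only [Finset.mem_union, Finset.mem_inter, Finset.mem_sdiff,
          Finset.notMem_empty, false_or]
        tauto
      simp only [mkStmt] at this
      rw [e1, e2] at this
      exact this
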